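/- In the fluid model with early birds and no effective deadline (T > Δ/μ), the equilibrium arrival distribution is uniform with density (μ/Δ)·(α/(α+β)) on the interval [−Δβ/(μα), Δ/μ]: this density integrates to 1 over that interval, and under this profile the cost of arriving at any t in the interval equals Δβ/μ, so the equilibrium social cost equals Δ²β/μ. -/

import Mathlib

/-- Fluid model with early birds and no effective deadline (`T > Δ/μ`):
the uniform density `(μ/Δ)·(α/(α+β))` on `[−Δβ/(μα), Δ/μ]` has total mass one,
the cost of arriving at any point of the support equals `Δβ/μ`, and hence the
equilibrium social cost equals `Δ²β/μ`. -/
theorem fluid_no_deadline_equilibrium (Δ μ α β : ℝ)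
    (hΔ : 0 < Δ) (hμ : 0 < μ) (hα : 0 < α) (hβ : 0 < β) :
    (μ / Δ * (α / (α + β))) * (Δ / μ + Δ * β / (μ * α)) = 1 ∧
    (∀ t ∈ Set.Icc (-(Δ * β / (μ * α))) (Δ / μ),
      α * (Δ * ((μ / Δ * (α / (α + β))) * (t + Δ * β / (μ * α))) / μ - t)
        + β * (Δ * ((μ / Δ * (α / (α + β))) * (t + Δ * β / (μ * α))) / μ)
        = Δ * β / μ) ∧
    Δ * (Δ * β / μ) = Δ ^ 2 * β / μ := by
  have hαβ : α + β ≠ 0 := by positivity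
  refine ⟨by field_simp, fun t _ => by field_simp; ring, by ring⟩
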